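/- arXiv:1806.06930 — 3 statements merged into one kernel-verified Lean document; each statement's English description precedes it below -/
import Mathlib

section
/- Let Γ(ε) (ε > 0) and Γ be positive bounded linear operators on a Hilbert space X such that ‖Γ(ε)h − Γh‖ → 0 as ε → 0⁺ for every h ∈ X. Then for every sequence εₙ > 0 with εₙ → 0 as n → ∞, the operator norms satisfy ‖εₙ(εₙI + Γ(εₙ))⁻¹ π_M‖ → 0 as n → ∞. -/
open scoped RealInnerProductSpace
open Filter MeasureTheory

/-- The orthogonal projection of `X` onto the subspace `M`, as a continuous linear map
`X →L[ℝ] X`. -/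
noncomputable def finProj {X : Type*} [NormedAddCommGroup X] [InnerProductSpace ℝ X]
    (M : Submodule ℝ X) [CompleteSpace M] : X →L[ℝ] X :=
  M.subtypeL ∘L M.orthogonalProjectionOnto

/-- Let `Γ(ε)` (`ε > 0`) and `Γ` be positive bounded linear operators on a
Hilbert space `X` such that `‖Γ(ε)h − Γh‖ → 0` as `ε → 0⁺` for every `h ∈ X`. Then for every
sequence `εₙ > 0` with `εₙ → 0`, the operator norms `‖εₙ(εₙI + Γ(εₙ))⁻¹ π_M‖ → 0`. -/
theorem finite_approx_resolvent_tendsto_zero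
    {X : Type*} [NormedAddCommGroup X] [InnerProductSpace ℝ X] [CompleteSpace X]
    (M : Submodule ℝ X) [FiniteDimensional ℝ M]
    (Γ : ℝ → (X →L[ℝ] X)) (Γ₀ : X →L[ℝ] X)
    (hΓsa : ∀ ε > (0 : ℝ), IsSelfAdjoint (Γ ε))
    (hΓpos : ∀ ε > (0 : ℝ), ∀ x : X, x ≠ 0 → 0 < ⟪Γ ε x, x⟫)
    (hΓ₀sa : IsSelfAdjoint Γ₀)
    (hΓ₀pos : ∀ x : X, x ≠ 0 → 0 < ⟪Γ₀ x, x⟫)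
    (hconv : ∀ h : X,
      Tendsto (fun ε => ‖Γ ε h - Γ₀ h‖) (nhdsWithin 0 (Set.Ioi 0)) (nhds 0))
    (R : ℝ → (X →L[ℝ] X))
    (hR : ∀ ε > (0 : ℝ),
      R ε ∘L (ε • (1 : X →L[ℝ] X) + Γ ε) = 1 ∧ (ε • (1 : X →L[ℝ] X) + Γ ε) ∘L R ε = 1)
    (e : ℕ → ℝ) (he : ∀ n, 0 < e n) (helim : Tendsto e atTop (nhds 0)) :
    Tendsto (fun n => ‖(e n) • (R (e n) ∘L finProj M)‖) atTop (nhds 0) := by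
  classical
  -- Γ(ε) is nonnegative
  have hΓnn : ∀ ε > (0 : ℝ), ∀ x : X, 0 ≤ ⟪Γ ε x, x⟫ := by
    intro ε hε x
    rcases eq_or_ne x 0 with rfl | hx
    · simp
    · exact (hΓpos ε hε x hx).le
  -- basic resolvent bound : ε‖R ε y‖ ≤ ‖y‖
  have hbound : ∀ ε > (0 : ℝ), ∀ y : X, ε * ‖R ε y‖ ≤ ‖y‖ := by
    intro ε hε y
    set x := R ε y with hxdef
    have hAx : ε • x + Γ ε x = y := by
      have h1 := congrArg (fun T : X →L[ℝ] X => T y) (hR ε hε).2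
      simpa [ContinuousLinearMap.comp_apply, ContinuousLinearMap.add_apply,
        ContinuousLinearMap.smul_apply, ContinuousLinearMap.one_apply] using h1
    rcases eq_or_ne x 0 with h0 | hx
    · simp [h0]
    · have h1 : ε * ‖x‖ ^ 2 ≤ ⟪y, x⟫ := by
        rw [← hAx]
        have h2 : ⟪ε • x + Γ ε x, x⟫ = ε * ⟪x, x⟫ + ⟪Γ ε x, x⟫ := by
          simp [inner_add_left, real_inner_smul_left]
        rw [h2, real_inner_self_eq_norm_sq]
        nlinarith [hΓnn ε hε x]
      have h2 : ⟪y, x⟫ ≤ ‖y‖ * ‖x‖ := real_inner_le_norm y x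
      have hxpos : 0 < ‖x‖ := norm_pos_iff.mpr hx
      nlinarith
  -- Γ₀ has dense range
  have hdense : ∀ h : X, ∀ δ > (0 : ℝ), ∃ g : X, ‖h - Γ₀ g‖ < δ := by
    intro h δ hδ
    have hcl : (LinearMap.range (Γ₀ : X →ₗ[ℝ] X)).topologicalClosure = ⊤ := by
      rw [Submodule.topologicalClosure_eq_top_iff, Submodule.eq_bot_iff]
      intro v hv
      by_contra hv0
      have h0 : ⟪Γ₀ v, v⟫ = 0 :=
        (Submodule.mem_orthogonal _ _).1 hv (Γ₀ v) ⟨v, rfl⟩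
      exact absurd h0 (ne_of_gt (hΓ₀pos v hv0))
    have hh : h ∈ closure ((LinearMap.range (Γ₀ : X →ₗ[ℝ] X)) : Set X) := by
      have : h ∈ (LinearMap.range (Γ₀ : X →ₗ[ℝ] X)).topologicalClosure := by
        rw [hcl]; trivial
      exact this
    rcases Metric.mem_closure_iff.1 hh δ hδ with ⟨u, hu, hud⟩
    rcases hu with ⟨g, rfl⟩
    exact ⟨g, by rwa [dist_eq_norm] at hud⟩
  have he' : Tendsto e atTop (nhdsWithin 0 (Set.Ioi 0)) := by
    rw [tendsto_nhdsWithin_iff]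
    exact ⟨helim, Eventually.of_forall fun n => he n⟩
  -- pointwise convergence
  have hpt : ∀ h : X, Tendsto (fun n => ‖e n • R (e n) h‖) atTop (nhds 0) := by
    intro h
    have key : Tendsto (fun n => e n • R (e n) h) atTop (nhds 0) := by
      rw [NormedAddCommGroup.tendsto_nhds_zero]
      intro δ hδ
      obtain ⟨g, hg⟩ := hdense h (δ / 3) (by linarith)
      have E1 : ∀ᶠ n in atTop, ‖Γ (e n) g - Γ₀ g‖ < δ / 3 := by
        have h1 : Tendsto (fun n => ‖Γ (e n) g - Γ₀ g‖) atTop (nhds 0) :=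
          (hconv g).comp he'
        exact h1.eventually_lt_const (by linarith)
      have E2 : ∀ᶠ n in atTop, 2 * (e n * ‖g‖) < δ / 3 := by
        have h1 : Tendsto (fun n => 2 * (e n * ‖g‖)) atTop (nhds 0) := by
          have := (helim.mul_const ‖g‖).const_mul 2
          simpa using this
        exact h1.eventually_lt_const (by linarith)
      filter_upwards [E1, E2] with n h1 h2
      have hεn := he n
      have hRg : R (e n) (Γ (e n) g) = g - e n • R (e n) g := by
        have h3 := congrArg (fun T : X →L[ℝ] X => T g) (hR (e n) hεn).1
        simp only [ContinuousLinearMap.comp_apply, ContinuousLinearMap.add_apply,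
          ContinuousLinearMap.smul_apply, ContinuousLinearMap.one_apply,
          map_add, ContinuousLinearMap.map_smul] at h3
        exact eq_sub_of_add_eq' h3
      have hdecomp : e n • R (e n) h
          = e n • R (e n) (h - Γ₀ g) + e n • R (e n) (Γ₀ g - Γ (e n) g)
            + e n • (g - e n • R (e n) g) := by
        have hh : h = (h - Γ₀ g) + (Γ₀ g - Γ (e n) g) + Γ (e n) g := by abel
        calc e n • R (e n) h
            = e n • R (e n) ((h - Γ₀ g) + (Γ₀ g - Γ (e n) g) + Γ (e n) g) := by
              rw [← hh]
          _ = e n • R (e n) (h - Γ₀ g) + e n • R (e n) (Γ₀ g - Γ (e n) g)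
              + e n • (g - e n • R (e n) g) := by
              rw [map_add, map_add, hRg, smul_add, smul_add]
      have hb1 : ‖e n • R (e n) (h - Γ₀ g)‖ ≤ ‖h - Γ₀ g‖ := by
        rw [norm_smul, Real.norm_of_nonneg hεn.le]
        exact hbound (e n) hεn _
      have hb2 : ‖e n • R (e n) (Γ₀ g - Γ (e n) g)‖ ≤ ‖Γ₀ g - Γ (e n) g‖ := by
        rw [norm_smul, Real.norm_of_nonneg hεn.le]
        exact hbound (e n) hεn _
      have hb3 : ‖e n • (g - e n • R (e n) g)‖ ≤ 2 * (e n * ‖g‖) := by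
        rw [norm_smul, Real.norm_of_nonneg hεn.le]
        have h4 : ‖g - e n • R (e n) g‖ ≤ ‖g‖ + ‖e n • R (e n) g‖ := norm_sub_le _ _
        have h5 : ‖e n • R (e n) g‖ ≤ ‖g‖ := by
          rw [norm_smul, Real.norm_of_nonneg hεn.le]
          exact hbound (e n) hεn g
        nlinarith
      have hb2' : ‖Γ₀ g - Γ (e n) g‖ < δ / 3 := by
        rwa [norm_sub_rev]
      calc ‖e n • R (e n) h‖
          ≤ ‖e n • R (e n) (h - Γ₀ g)‖ + ‖e n • R (e n) (Γ₀ g - Γ (e n) g)‖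
            + ‖e n • (g - e n • R (e n) g)‖ := by
            rw [hdecomp]; exact norm_add₃_le
        _ < δ := by linarith
    have := key.norm
    simpa using this
  -- reduce the operator norm to a finite sum over an orthonormal basis of M
  set b := stdOrthonormalBasis ℝ M with hb
  have hle : ∀ n, ‖e n • (R (e n) ∘L finProj M)‖
      ≤ ∑ i, ‖e n • R (e n) ((b i : X))‖ := by
    intro n
    apply ContinuousLinearMap.opNorm_le_bound
    · positivity
    · intro x
      set m : M := M.orthogonalProjectionOnto x with hm
      have hmx : ‖m‖ ≤ ‖x‖ := by
        have := (M.orthogonalProjectionOnto).le_opNorm x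
        calc ‖m‖ ≤ ‖M.orthogonalProjectionOnto‖ * ‖x‖ := this
          _ ≤ 1 * ‖x‖ :=
            mul_le_mul_of_nonneg_right (Submodule.orthogonalProjectionOnto_norm_le M) (norm_nonneg x)
          _ = ‖x‖ := one_mul _
      have hmsum : (m : X) = ∑ i, b.repr m i • ((b i : X)) := by
        conv_lhs => rw [← b.sum_repr m]
        rw [Submodule.coe_sum]
        simp
      have happ : (e n • (R (e n) ∘L finProj M)) x
          = ∑ i, b.repr m i • (e n • R (e n) ((b i : X))) := by
        have h0 : (e n • (R (e n) ∘L finProj M)) x = e n • R (e n) ((m : X)) := by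
          simp [finProj, hm]
        rw [h0, hmsum, map_sum, Finset.smul_sum]
        refine Finset.sum_congr rfl fun i _ => ?_
        rw [ContinuousLinearMap.map_smul, smul_comm]
      rw [happ]
      calc ‖∑ i, b.repr m i • (e n • R (e n) ((b i : X)))‖
          ≤ ∑ i, ‖b.repr m i • (e n • R (e n) ((b i : X)))‖ := norm_sum_le _ _
        _ ≤ ∑ i, ‖e n • R (e n) ((b i : X))‖ * ‖x‖ := by
            refine Finset.sum_le_sum fun i _ => ?_
            rw [norm_smul, mul_comm]
            refine mul_le_mul_of_nonneg_left ?_ (norm_nonneg _)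
            have h1 : b.repr m i = ⟪b i, m⟫ := b.repr_apply_apply m i
            have h2 : |⟪b i, m⟫| ≤ ‖b i‖ * ‖m‖ := abs_real_inner_le_norm _ _
            have h3 : ‖b i‖ = 1 := b.orthonormal.1 i
            calc ‖b.repr m i‖ = |⟪b i, m⟫| := by rw [h1, Real.norm_eq_abs]
              _ ≤ ‖b i‖ * ‖m‖ := h2
              _ = ‖m‖ := by rw [h3, one_mul]
              _ ≤ ‖x‖ := hmx
        _ = (∑ i, ‖e n • R (e n) ((b i : X))‖) * ‖x‖ := by rw [Finset.sum_mul]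
  have hsum : Tendsto (fun n => ∑ i, ‖e n • R (e n) ((b i : X))‖) atTop (nhds 0) := by
    have h1 := tendsto_finset_sum Finset.univ
      (fun (i : Fin (Module.finrank ℝ M)) _ => hpt ((b i : X)))
    simpa using h1
  exact squeeze_zero (fun n => norm_nonneg _) hle hsum
end

section
/- Let Γ be a positive bounded linear operator on a Hilbert space X and ε > 0. Then for every h ∈ X, ‖ε(ε(I − π_M) + Γ)⁻¹h‖ ≤ (1 − ‖ε(εI + Γ)⁻¹π_M‖)⁻¹ ‖ε(εI + Γ)⁻¹h‖ (the denominator being positive since ‖ε(εI + Γ)⁻¹π_M‖ < 1). -/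
open scoped RealInnerProductSpace
open Filter

/-- For a positive `Γ` and `ε > 0`: `‖ε(εI + Γ)⁻¹π_M‖ < 1` and for every
`h ∈ X`, `‖ε(ε(I − π_M) + Γ)⁻¹h‖ ≤ (1 − ‖ε(εI + Γ)⁻¹π_M‖)⁻¹ ‖ε(εI + Γ)⁻¹h‖`. -/
theorem resolvent_like_norm_bound
    {X : Type*} [NormedAddCommGroup X] [InnerProductSpace ℝ X] [CompleteSpace X]
    (M : Submodule ℝ X) [FiniteDimensional ℝ M]
    (Γ : X →L[ℝ] X) (hΓsa : IsSelfAdjoint Γ)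
    (hΓpos : ∀ x : X, x ≠ 0 → 0 < ⟪Γ x, x⟫)
    (ε : ℝ) (hε : 0 < ε)
    (R₁ : X →L[ℝ] X)
    (hR₁ : R₁ ∘L (ε • (1 : X →L[ℝ] X) + Γ) = 1 ∧ (ε • (1 : X →L[ℝ] X) + Γ) ∘L R₁ = 1)
    (R₂ : X →L[ℝ] X)
    (hR₂ : R₂ ∘L (ε • ((1 : X →L[ℝ] X) - finProj M) + Γ) = 1 ∧
      (ε • ((1 : X →L[ℝ] X) - finProj M) + Γ) ∘L R₂ = 1) :
    ‖ε • (R₁ ∘L finProj M)‖ < 1 ∧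
    ∀ h : X, ‖ε • R₂ h‖ ≤ (1 - ‖ε • (R₁ ∘L finProj M)‖)⁻¹ * ‖ε • R₁ h‖ := by
  obtain ⟨hR₁l, hR₁r⟩ := hR₁
  obtain ⟨hR₂l, hR₂r⟩ := hR₂
  set P := finProj M with hP
  set T := ε • (R₁ ∘L P) with hT
  have hTx : ∀ x : X, T x = ε • R₁ (P x) := by
    intro x; simp [hT]
  -- strict pointwise contraction of ε R₁
  have key : ∀ y : X, y ≠ 0 → ‖ε • R₁ y‖ < ‖y‖ := by
    intro y hy
    set z := R₁ y with hzdef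
    have hz : ε • z + Γ z = y := by
      have := congrArg (fun f : X →L[ℝ] X => f y) hR₁r
      simpa using this
    have hzne : z ≠ 0 := by
      intro h0
      apply hy
      rw [← hz, h0]; simp
    have hpos : 0 < ⟪Γ z, z⟫ := hΓpos z hzne
    have hsq : ‖ε • z‖ ^ 2 < ‖y‖ ^ 2 := by
      rw [← hz]
      have hexp := @norm_add_sq_real X _ _ (ε • z) (Γ z)
      have hinn : ⟪ε • z, Γ z⟫ = ε * ⟪Γ z, z⟫ := by
        rw [real_inner_smul_left, real_inner_comm]
      nlinarith [sq_nonneg ‖Γ z‖, mul_pos hε hpos]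
    exact lt_of_pow_lt_pow_left₀ 2 (norm_nonneg y) hsq
  -- bound constant via compactness of the sphere in M
  obtain ⟨c, hc0, hc1, hcb⟩ : ∃ c : ℝ, 0 ≤ c ∧ c < 1 ∧ ∀ x : X, ‖T x‖ ≤ c * ‖x‖ := by
    have hPnorm : ∀ x : X, ‖P x‖ ≤ ‖x‖ := by
      intro x
      have := Submodule.orthogonalProjectionOnto_norm_le M
      calc ‖P x‖ = ‖(M.orthogonalProjectionOnto x : X)‖ := by simp [hP, finProj]
        _ ≤ ‖x‖ := by
          simpa using (M.orthogonalProjectionOnto).le_of_opNorm_le (Submodule.orthogonalProjectionOnto_norm_le M) x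
    by_cases hMtriv : ∀ m : M, m = 0
    · refine ⟨0, le_refl _, by norm_num, fun x => ?_⟩
      have h0 : M.orthogonalProjectionOnto x = 0 := hMtriv _
      simp [hTx, hP, finProj, h0]
    · push_neg at hMtriv
      obtain ⟨m₁, hm₁⟩ := hMtriv
      have : Nontrivial M := ⟨m₁, 0, hm₁⟩
      have hcpt : IsCompact (Metric.sphere (0:M) 1) := isCompact_sphere 0 1
      have hne : (Metric.sphere (0:M) 1).Nonempty :=
        NormedSpace.sphere_nonempty.2 zero_le_one
      have hcont : Continuous fun m : M => ‖ε • R₁ (m : X)‖ :=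
        ((R₁.continuous.comp continuous_subtype_val).const_smul ε).norm
      obtain ⟨m₀, hm₀, hmax⟩ := hcpt.exists_isMaxOn hne hcont.continuousOn
      have hm₀n : ‖m₀‖ = 1 := by simpa using hm₀
      refine ⟨‖ε • R₁ (m₀ : X)‖, norm_nonneg _, ?_, ?_⟩
      · have hne0 : (m₀ : X) ≠ 0 := by
          intro h
          have : ‖(m₀ : X)‖ = 1 := by rw [Submodule.norm_coe]; exact hm₀n
          rw [h] at this; simp at this
        have := key _ hne0
        rwa [show ‖(m₀ : X)‖ = 1 from by rw [Submodule.norm_coe]; exact hm₀n] at this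
      · intro x
        by_cases hx : M.orthogonalProjectionOnto x = 0
        · have : T x = 0 := by simp [hTx, hP, finProj, hx]
          rw [this, norm_zero]
          positivity
        · set m := M.orthogonalProjectionOnto x with hm
          have hmne : ‖m‖ ≠ 0 := by simpa using hx
          have hmem : (‖m‖⁻¹ • m) ∈ Metric.sphere (0:M) 1 := by
            simp only [Metric.mem_sphere, dist_zero_right, norm_smul, norm_inv, norm_norm]
            exact inv_mul_cancel₀ hmne
          have hle := hmax hmem
          have hrw : ‖ε • R₁ ((‖m‖⁻¹ • m : M) : X)‖ = ‖m‖⁻¹ * ‖ε • R₁ (m : X)‖ := by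
            push_cast
            rw [map_smul, smul_comm, norm_smul]
            simp [abs_of_nonneg (inv_nonneg.2 (norm_nonneg m))]
          have hle' : ‖ε • R₁ (m : X)‖ ≤ ‖m‖ * ‖ε • R₁ (m₀ : X)‖ := by
            have := hle
            simp only [Set.mem_setOf_eq] at this
            rw [hrw] at this
            have hmpos : 0 < ‖m‖ := lt_of_le_of_ne (norm_nonneg m) (Ne.symm hmne)
            calc ‖ε • R₁ (m : X)‖ = ‖m‖ * (‖m‖⁻¹ * ‖ε • R₁ (m : X)‖) := by
                  rw [← mul_assoc, mul_inv_cancel₀ hmne, one_mul]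
              _ ≤ ‖m‖ * ‖ε • R₁ (m₀ : X)‖ := by
                  exact mul_le_mul_of_nonneg_left this (norm_nonneg m)
          have hTxm : T x = ε • R₁ (m : X) := by simp [hTx, hP, finProj, hm]
          rw [hTxm]
          calc ‖ε • R₁ (m : X)‖ ≤ ‖m‖ * ‖ε • R₁ (m₀ : X)‖ := hle'
            _ ≤ ‖ε • R₁ (m₀ : X)‖ * ‖x‖ := by
                rw [mul_comm]
                apply mul_le_mul_of_nonneg_left _ (norm_nonneg _)
                have : ‖m‖ = ‖P x‖ := by simp [hP, finProj, hm]
                rw [this]; exact hPnorm x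
  have hTnorm : ‖T‖ < 1 := lt_of_le_of_lt (T.opNorm_le_bound hc0 hcb) hc1
  refine ⟨hTnorm, fun h => ?_⟩
  -- identity: ε R₂ h = ε R₁ h + T (ε R₂ h)
  set u := ε • R₂ h with hu
  set v := ε • R₁ h with hv
  have hid : u = v + T u := by
    set w := R₂ h with hw
    have hBu : ε • w - ε • P w + Γ w = h := by
      have := congrArg (fun f : X →L[ℝ] X => f h) hR₂r
      simpa [smul_sub, hw] using this
    have hAu : (ε • (1 : X →L[ℝ] X) + Γ) w = h + ε • P w := by
      simp only [ContinuousLinearMap.add_apply, ContinuousLinearMap.smul_apply,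
        ContinuousLinearMap.one_apply]
      rw [← hBu]; abel
    have h1 : R₁ ((ε • (1 : X →L[ℝ] X) + Γ) w) = w := by
      have := congrArg (fun f : X →L[ℝ] X => f w) hR₁l
      simpa using this
    have h2 : w = R₁ h + ε • R₁ (P w) :=
      calc w = R₁ ((ε • (1 : X →L[ℝ] X) + Γ) w) := h1.symm
        _ = R₁ (h + ε • P w) := by rw [hAu]
        _ = R₁ h + ε • R₁ (P w) := by rw [map_add, map_smul]
    calc u = ε • w := hu
      _ = ε • (R₁ h + ε • R₁ (P w)) := by rw [← h2]
      _ = v + T u := by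
        rw [hv, hTx, hu, smul_add]
        congr 1
        rw [map_smul, map_smul, smul_comm]
  have hbound : ‖u‖ ≤ ‖v‖ + ‖T‖ * ‖u‖ := by
    calc ‖u‖ = ‖v + T u‖ := by rw [← hid]
      _ ≤ ‖v‖ + ‖T u‖ := norm_add_le _ _
      _ ≤ ‖v‖ + ‖T‖ * ‖u‖ := by gcongr; exact T.le_opNorm u
  have hpos : 0 < 1 - ‖T‖ := by linarith
  rw [inv_mul_eq_div, le_div_iff₀ hpos]
  nlinarith [norm_nonneg u]
end

section
/- Assume the Gramian Γ₀ᵀ is positive. Fix ε > 0, x₀, h ∈ X, a finite-dimensional subspace M of X, let φ_min = −(ε(I − π_M) + Γ₀ᵀ)⁻¹(𝔘(T)x₀ − h), and define the control u_ε(s) = B*𝔘*(T−s)φ_min. Then the mild solution x_ε(T) = 𝔘(T)x₀ + ∫₀ᵀ 𝔘(T−s)Bu_ε(s) ds satisfies x_ε(T) − h = ε(I − π_M)(ε(I − π_M) + Γ₀ᵀ)⁻¹(𝔘(T)x₀ − h); in particular π_M x_ε(T) = π_M h and ‖x_ε(T) − h‖ ≤ ε‖(ε(I − π_M) + Γ₀ᵀ)⁻¹(𝔘(T)x₀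 − h)‖. -/
open scoped RealInnerProductSpace
open Filter MeasureTheory

/-- With `φ_min = −(ε(I − π_M) + Γ₀ᵀ)⁻¹(𝔘(T)x₀ − h)` and the control
`u_ε(s) = B*𝔘*(T−s)φ_min`, the final state `x_ε(T) = 𝔘(T)x₀ + ∫₀ᵀ 𝔘(T−s)Bu_ε(s) ds` satisfies
`x_ε(T) − h = ε(I − π_M)(ε(I − π_M) + Γ₀ᵀ)⁻¹(𝔘(T)x₀ − h)`; in particular
`π_M x_ε(T) = π_M h` and `‖x_ε(T) − h‖ ≤ ε‖(ε(I − π_M) + Γ₀ᵀ)⁻¹(𝔘(T)x₀ − h)‖`. -/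
theorem variational_control_final_state
    {X U : Type*} [NormedAddCommGroup X] [InnerProductSpace ℝ X] [CompleteSpace X]
    [TopologicalSpace.SeparableSpace X]
    [NormedAddCommGroup U] [InnerProductSpace ℝ U] [CompleteSpace U]
    [TopologicalSpace.SeparableSpace U]
    (𝔘 : ℝ → (X →L[ℝ] X))
    (h𝔘0 : 𝔘 0 = 1)
    (h𝔘add : ∀ s ≥ (0 : ℝ), ∀ t ≥ (0 : ℝ), 𝔘 (t + s) = 𝔘 t ∘L 𝔘 s)
    (h𝔘cont : ∀ x : X, ContinuousOn (fun t => 𝔘 t x) (Set.Ici 0))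
    (B : U →L[ℝ] X) (T : ℝ) (hT : 0 < T)
    (Γ : X →L[ℝ] X)
    (hΓ : ∀ x : X, Γ x = ∫ s in (0:ℝ)..T,
      (𝔘 (T - s)) (B (ContinuousLinearMap.adjoint B ((ContinuousLinearMap.adjoint (𝔘 (T - s))) x))))
    (hΓsa : IsSelfAdjoint Γ)
    (hΓpos : ∀ x : X, x ≠ 0 → 0 < ⟪Γ x, x⟫)
    (M : Submodule ℝ X) [FiniteDimensional ℝ M]
    (ε : ℝ) (hε : 0 < ε) (x₀ h : X)
    (R : X →L[ℝ] X)
    (hR : R ∘L (ε • ((1 : X →L[ℝ] X) - finProj M) + Γ) = 1 ∧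
      (ε • ((1 : X →L[ℝ] X) - finProj M) + Γ) ∘L R = 1)
    (φmin : X) (hφmin : φmin = -(R (𝔘 T x₀ - h)))
    (uε : ℝ → U)
    (huε : ∀ s : ℝ, uε s = ContinuousLinearMap.adjoint B
      ((ContinuousLinearMap.adjoint (𝔘 (T - s))) φmin))
    (xT : X)
    (hxT : xT = 𝔘 T x₀ + ∫ s in (0:ℝ)..T, 𝔘 (T - s) (B (uε s))) :
    xT - h = ε • (R (𝔘 T x₀ - h) - finProj M (R (𝔘 T x₀ - h))) ∧
    finProj M xT = finProj M h ∧
    ‖xT - h‖ ≤ ε * ‖R (𝔘 T x₀ - h)‖ := by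
  set g := 𝔘 T x₀ - h with hg
  have hint : (∫ s in (0:ℝ)..T, 𝔘 (T - s) (B (uε s))) = Γ φmin := by
    rw [hΓ φmin]; simp only [huε]
  have hcomp := hR.2
  have happ : (ε • ((1 : X →L[ℝ] X) - finProj M) + Γ) (R g) = g := by
    rw [← ContinuousLinearMap.comp_apply, hcomp]; rfl
  have hΓR : Γ (R g) = g - ε • (R g - finProj M (R g)) := by
    have := happ
    simp only [ContinuousLinearMap.add_apply, ContinuousLinearMap.smul_apply,
      ContinuousLinearMap.sub_apply, ContinuousLinearMap.one_apply] at this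
    linear_combination (norm := abel) this
  have key : xT - h = ε • (R g - finProj M (R g)) := by
    rw [hxT, hint, hφmin, map_neg, hΓR, hg]
    abel
  refine ⟨key, ?_, ?_⟩
  · have hproj : finProj M (xT - h) = 0 := by
      rw [key, _root_.map_smul, map_sub]
      have : finProj M (finProj M (R g)) = finProj M (R g) := by
        simp only [finProj, ContinuousLinearMap.comp_apply, Submodule.subtypeL_apply]
        rw [Submodule.orthogonalProjectionOnto_mem_subspace_eq_self]
      rw [this, sub_self, smul_zero]
    have := hproj
    rw [map_sub, sub_eq_zero] at this
    exact this
  · rw [key]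
    rw [norm_smul, Real.norm_eq_abs, abs_of_pos hε]
    refine mul_le_mul_of_nonneg_left ?_ hε.le
    set v := R g
    have horth : ⟪v - finProj M v, finProj M v⟫ = 0 := by
      have h1 : v - finProj M v ∈ Mᗮ := Submodule.sub_starProjection_mem_orthogonal (K := M) v
      have h2 : finProj M v ∈ M := by
        simp [finProj]
      rw [real_inner_comm]
      exact h1 (finProj M v) h2
    have hpyth : ‖v - finProj M v‖ ^ 2 + ‖finProj M v‖ ^ 2 = ‖v‖ ^ 2 := by
      have := norm_add_sq_real (v - finProj M v) (finProj M v)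
      rw [horth] at this
      simp only [sub_add_cancel] at this
      linarith
    have h2 : ‖v - finProj M v‖ ^ 2 ≤ ‖v‖ ^ 2 := by nlinarith [sq_nonneg ‖finProj M v‖]
    nlinarith [norm_nonneg (v - finProj M v), norm_nonneg v]
end
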